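/- The n×n unreduced Burau matrices satisfy the braid relation A_i A_{i+1} A_i = A_{i+1} A_i A_{i+1} for 1 ≤ i ≤ n-2, and hence (together with A_i A_j = A_j A_i for |i-j| ≥ 2 and invertibility of each A_i) there is a well-defined monoid homomorphism from the bonded braid monoid M_n to GL_n(ℤ[t,t⁻¹,z]) sending σ_i ↦ A_i and b_i ↦ B_i. -/

import Mathlib

/-- The ground ring `ℤ[t,t⁻¹,z]`: polynomials in `z` over Laurent polynomials in `t`. -/
noncomputable abbrev R : Type := Polynomial (LaurentPolynomial ℤ)

/-- The Laurent variable `t`. -/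
noncomputable def t : R := Polynomial.C (LaurentPolynomial.T 1)

/-- The polynomial variable `z`. -/
noncomputable def z : R := Polynomial.X

/-- The `n × n` unreduced Burau matrix of the braid generator `σ_i` (1-based index `i`):
identity except for the block `[[1-t, t],[1, 0]]` at rows/columns `i, i+1`. -/
noncomputable def burauA (n i : ℕ) : Matrix (Fin n) (Fin n) R :=
  Matrix.of fun p q =>
    if (p : ℕ) + 1 = i ∧ (q : ℕ) + 1 = i then 1 - t
    else if (p : ℕ) + 1 = i ∧ (q : ℕ) = i then t
    else if (p : ℕ) = i ∧ (q : ℕ) + 1 = i then 1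
    else if (p : ℕ) = i ∧ (q : ℕ) = i then 0
    else if p = q then 1 else 0

/-- The `n × n` bonded Burau matrix of the bond generator `b_i` (1-based index `i`):
identity except for the block `[[1-tz, tz],[z, 1-z]]` at rows/columns `i, i+1`. -/
noncomputable def burauB (n i : ℕ) : Matrix (Fin n) (Fin n) R :=
  Matrix.of fun p q =>
    if (p : ℕ) + 1 = i ∧ (q : ℕ) + 1 = i then 1 - t * z
    else if (p : ℕ) + 1 = i ∧ (q : ℕ) = i then t * z
    else if (p : ℕ) = i ∧ (q : ℕ) + 1 = i then z
    else if (p : ℕ) = i ∧ (q : ℕ) = i then 1 - z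
    else if p = q then 1 else 0

/-- Generators of the bonded braid monoid `M_n`: `σ_i`, `σ_i⁻¹`, and bonds `b_i`. -/
inductive BGen : Type
  | s : ℕ → BGen
  | si : ℕ → BGen
  | b : ℕ → BGen

open FreeMonoid in
/-- The defining relations (R1)–(R3), (B1), (M1)–(M4) of the bonded braid monoid `M_n`
(generator indices are 1-based, running over `1, …, n-1`). -/
inductive BRel (n : ℕ) : FreeMonoid BGen → FreeMonoid BGen → Prop
  | r1 (i : ℕ) (h1 : 1 ≤ i) (h2 : i ≤ n - 1) :
      BRel n (of (.s i) * of (.si i)) 1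
  | r1' (i : ℕ) (h1 : 1 ≤ i) (h2 : i ≤ n - 1) :
      BRel n (of (.si i) * of (.s i)) 1
  | r2 (i j : ℕ) (h1 : 1 ≤ i) (h2 : i + 2 ≤ j) (h3 : j ≤ n - 1) :
      BRel n (of (.s i) * of (.s j)) (of (.s j) * of (.s i))
  | r3 (i : ℕ) (h1 : 1 ≤ i) (h2 : i ≤ n - 2) :
      BRel n (of (.s i) * of (.s (i + 1)) * of (.s i))
        (of (.s (i + 1)) * of (.s i) * of (.s (i + 1)))
  | b1 (i j : ℕ) (h1 : 1 ≤ i) (h2 : i + 2 ≤ j) (h3 : j ≤ n - 1) :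
      BRel n (of (.b i) * of (.b j)) (of (.b j) * of (.b i))
  | m1 (i j : ℕ) (hi1 : 1 ≤ i) (hi2 : i ≤ n - 1) (hj1 : 1 ≤ j) (hj2 : j ≤ n - 1)
      (h : i + 2 ≤ j ∨ j + 2 ≤ i) :
      BRel n (of (.s i) * of (.b j)) (of (.b j) * of (.s i))
  | m2 (i : ℕ) (h1 : 1 ≤ i) (h2 : i ≤ n - 1) :
      BRel n (of (.s i) * of (.b i)) (of (.b i) * of (.s i))
  | m3 (i : ℕ) (h1 : 1 ≤ i) (h2 : i ≤ n - 2) :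
      BRel n (of (.s (i + 1)) * of (.s i) * of (.b (i + 1)))
        (of (.b i) * of (.s (i + 1)) * of (.s i))
  | m4 (i : ℕ) (h1 : 1 ≤ i) (h2 : i ≤ n - 2) :
      BRel n (of (.s i) * of (.s (i + 1)) * of (.b i))
        (of (.b (i + 1)) * of (.s i) * of (.s (i + 1)))

/-- The bonded braid monoid `M_n`, presented by the generators `BGen` and the
relations `BRel n`. -/
abbrev BondedBraidMonoid (n : ℕ) : Type := (conGen (BRel n)).Quotient


open Matrix

noncomputable def tinv : R := Polynomial.C (LaurentPolynomial.T (-1))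

noncomputable def burauAinv (n i : ℕ) : Matrix (Fin n) (Fin n) R :=
  Matrix.of fun p q =>
    if (p : ℕ) + 1 = i ∧ (q : ℕ) + 1 = i then 0
    else if (p : ℕ) + 1 = i ∧ (q : ℕ) = i then 1
    else if (p : ℕ) = i ∧ (q : ℕ) + 1 = i then tinv
    else if (p : ℕ) = i ∧ (q : ℕ) = i then 1 - tinv
    else if p = q then 1 else 0

lemma t_mul_tinv : t * tinv = 1 := by
  rw [t, tinv, ← Polynomial.C_mul, ← LaurentPolynomial.T_add]
  norm_num

lemma tinv_mul_t : tinv * t = 1 := by rw [mul_comm]; exact t_mul_tinv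

noncomputable def EE (n : ℕ) (x y : Fin n) : Matrix (Fin n) (Fin n) R := single x y 1

lemma EE_mul_same (n : ℕ) (x y w : Fin n) (c d : R) :
    (c • EE n x y) * (d • EE n y w) = (c * d) • EE n x w := by
  rw [smul_mul_smul_comm, EE, EE, EE, Matrix.single_mul_single_same, mul_one]

lemma EE_mul_ne (n : ℕ) (x w : Fin n) {y u : Fin n} (h : y ≠ u) (c d : R) :
    (c • EE n x y) * (d • EE n u w) = 0 := by
  rw [smul_mul_smul_comm, EE, EE,
    show single x y (1:R) * single u w 1 = 0 from
      by rw [Matrix.single_mul_single_of_ne (h := h)], smul_zero]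

lemma EE_apply (n : ℕ) (x y p q : Fin n) : EE n x y p q = if p = x ∧ q = y then 1 else 0 := by
  simp [EE, single, and_comm, eq_comm]

lemma block_decomp (n i : ℕ) (a b : Fin n) (ha : (a:ℕ) + 1 = i) (hb : (b:ℕ) = i)
    (w x y zz : R) :
    (Matrix.of fun p q : Fin n =>
      if (p : ℕ) + 1 = i ∧ (q : ℕ) + 1 = i then w
      else if (p : ℕ) + 1 = i ∧ (q : ℕ) = i then x
      else if (p : ℕ) = i ∧ (q : ℕ) + 1 = i then y
      else if (p : ℕ) = i ∧ (q : ℕ) = i then zz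
      else if p = q then 1 else 0) =
    1 + (w - 1) • EE n a a + x • EE n a b + y • EE n b a + (zz - 1) • EE n b b := by
  have hab : a ≠ b := by simp only [ne_eq, Fin.ext_iff]; omega
  ext p q
  have k1 : ∀ r : Fin n, ((r:ℕ) + 1 = i ↔ r = a) := fun r => by rw [Fin.ext_iff]; omega
  have k2 : ∀ r : Fin n, ((r:ℕ) = i ↔ r = b) := fun r => by rw [Fin.ext_iff]; omega
  simp only [Matrix.of_apply, Matrix.add_apply, Matrix.smul_apply, EE_apply, Matrix.one_apply,
    smul_eq_mul, k1, k2]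
  by_cases h1 : p = a <;> by_cases h3 : q = a <;> by_cases h2 : p = b <;> by_cases h4 : q = b <;>
    simp_all <;> ring

lemma burauA_eq (n i : ℕ) (a b : Fin n) (ha : (a:ℕ) + 1 = i) (hb : (b:ℕ) = i) :
    burauA n i = 1 + (-t) • EE n a a + t • EE n a b + (1:R) • EE n b a + (-1:R) • EE n b b := by
  have h := block_decomp n i a b ha hb (1-t) t 1 0
  rw [show (1-t-1 : R) = -t by ring, show ((0:R)-1) = -1 by ring] at h
  exact h

lemma burauB_eq (n i : ℕ) (a b : Fin n) (ha : (a:ℕ) + 1 = i) (hb : (b:ℕ) = i) :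
    burauB n i = 1 + (-(t*z)) • EE n a a + (t*z) • EE n a b + z • EE n b a + (-z) • EE n b b := by
  have h := block_decomp n i a b ha hb (1-t*z) (t*z) z (1-z)
  rw [show (1-t*z-1 : R) = -(t*z) by ring, show ((1:R)-z-1) = -z by ring] at h
  exact h

lemma burauAinv_eq (n i : ℕ) (a b : Fin n) (ha : (a:ℕ) + 1 = i) (hb : (b:ℕ) = i) :
    burauAinv n i = 1 + (-1:R) • EE n a a + (1:R) • EE n a b + tinv • EE n b a + (-tinv) • EE n b b := by
  have h := block_decomp n i a b ha hb 0 1 tinv (1-tinv)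
  rw [show ((0:R)-1) = -1 by ring, show ((1:R)-tinv-1) = -tinv by ring] at h
  exact h

lemma mul_AAinv (n i : ℕ) (a b : Fin n) (ha : (a:ℕ)+1 = i) (hb : (b:ℕ) = i) :
    burauA n i * burauAinv n i = 1 ∧ burauAinv n i * burauA n i = 1 := by
  have hab : a ≠ b := by simp only [ne_eq, Fin.ext_iff]; omega
  have hba := hab.symm
  rw [burauA_eq n i a b ha hb, burauAinv_eq n i a b ha hb]
  constructor <;>
  · simp only [mul_add, add_mul, one_mul, mul_one, EE_mul_same,
      EE_mul_ne n _ _ hab, EE_mul_ne n _ _ hba, add_zero, zero_add, mul_zero, zero_mul,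
      neg_mul, mul_neg, neg_neg, t_mul_tinv, tinv_mul_t]
    match_scalars <;>
      first
        | ring1
        | linear_combination t_mul_tinv
        | linear_combination -t_mul_tinv
        | linear_combination tinv_mul_t
        | linear_combination -tinv_mul_t

lemma braidA (n i : ℕ) (a b c : Fin n) (ha : (a:ℕ)+1 = i) (hb : (b:ℕ) = i) (hc : (c:ℕ) = i+1) :
    burauA n i * burauA n (i+1) * burauA n i = burauA n (i+1) * (burauA n i * burauA n (i+1)) := by
  have hab : a ≠ b := by simp only [ne_eq, Fin.ext_iff]; omega
  have hbc : b ≠ c := by simp only [ne_eq, Fin.ext_iff]; omega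
  have hac : a ≠ c := by simp only [ne_eq, Fin.ext_iff]; omega
  have hba := hab.symm; have hcb := hbc.symm; have hca := hac.symm
  rw [burauA_eq n i a b ha hb, burauA_eq n (i+1) b c (by omega) hc]
  simp only [mul_add, add_mul, one_mul, mul_one, EE_mul_same,
    EE_mul_ne n _ _ hab, EE_mul_ne n _ _ hba, EE_mul_ne n _ _ hbc, EE_mul_ne n _ _ hcb,
    EE_mul_ne n _ _ hac, EE_mul_ne n _ _ hca, add_zero, zero_add, mul_zero, zero_mul,
    neg_mul, mul_neg, neg_neg]
  module

lemma commAB_same (n i : ℕ) (a b : Fin n) (ha : (a:ℕ)+1 = i) (hb : (b:ℕ) = i) :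
    burauA n i * burauB n i = burauB n i * burauA n i := by
  have hab : a ≠ b := by simp only [ne_eq, Fin.ext_iff]; omega
  have hba := hab.symm
  rw [burauA_eq n i a b ha hb, burauB_eq n i a b ha hb]
  simp only [mul_add, add_mul, one_mul, mul_one, EE_mul_same,
    EE_mul_ne n _ _ hab, EE_mul_ne n _ _ hba, add_zero, zero_add, mul_zero, zero_mul,
    neg_mul, mul_neg, neg_neg]
  module

lemma m3rel (n i : ℕ) (a b c : Fin n) (ha : (a:ℕ)+1 = i) (hb : (b:ℕ) = i) (hc : (c:ℕ) = i+1) :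
    burauA n (i+1) * burauA n i * burauB n (i+1) = burauB n i * burauA n (i+1) * burauA n i := by
  have hab : a ≠ b := by simp only [ne_eq, Fin.ext_iff]; omega
  have hbc : b ≠ c := by simp only [ne_eq, Fin.ext_iff]; omega
  have hac : a ≠ c := by simp only [ne_eq, Fin.ext_iff]; omega
  have hba := hab.symm; have hcb := hbc.symm; have hca := hac.symm
  rw [burauA_eq n i a b ha hb, burauA_eq n (i+1) b c (by omega) hc,
    burauB_eq n i a b ha hb, burauB_eq n (i+1) b c (by omega) hc]
  simp only [mul_add, add_mul, one_mul, mul_one, EE_mul_same,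
    EE_mul_ne n _ _ hab, EE_mul_ne n _ _ hba, EE_mul_ne n _ _ hbc, EE_mul_ne n _ _ hcb,
    EE_mul_ne n _ _ hac, EE_mul_ne n _ _ hca, add_zero, zero_add, mul_zero, zero_mul,
    neg_mul, mul_neg, neg_neg]
  module

lemma m4rel (n i : ℕ) (a b c : Fin n) (ha : (a:ℕ)+1 = i) (hb : (b:ℕ) = i) (hc : (c:ℕ) = i+1) :
    burauA n i * burauA n (i+1) * burauB n i = burauB n (i+1) * burauA n i * burauA n (i+1) := by
  have hab : a ≠ b := by simp only [ne_eq, Fin.ext_iff]; omega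
  have hbc : b ≠ c := by simp only [ne_eq, Fin.ext_iff]; omega
  have hac : a ≠ c := by simp only [ne_eq, Fin.ext_iff]; omega
  have hba := hab.symm; have hcb := hbc.symm; have hca := hac.symm
  rw [burauA_eq n i a b ha hb, burauA_eq n (i+1) b c (by omega) hc,
    burauB_eq n i a b ha hb, burauB_eq n (i+1) b c (by omega) hc]
  simp only [mul_add, add_mul, one_mul, mul_one, EE_mul_same,
    EE_mul_ne n _ _ hab, EE_mul_ne n _ _ hba, EE_mul_ne n _ _ hbc, EE_mul_ne n _ _ hcb,
    EE_mul_ne n _ _ hac, EE_mul_ne n _ _ hca, add_zero, zero_add, mul_zero, zero_mul,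
    neg_mul, mul_neg, neg_neg]
  module

lemma far_comm (n : ℕ) (a b a' b' : Fin n) (M N : Matrix (Fin n) (Fin n) R)
    (w x y zz w' x' y' zz' : R)
    (hM : M = 1 + w • EE n a a + x • EE n a b + y • EE n b a + zz • EE n b b)
    (hN : N = 1 + w' • EE n a' a' + x' • EE n a' b' + y' • EE n b' a' + zz' • EE n b' b')
    (h1 : a ≠ a') (h2 : a ≠ b') (h3 : b ≠ a') (h4 : b ≠ b') : M * N = N * M := by
  subst hM hN
  simp only [mul_add, add_mul, one_mul, mul_one,
    EE_mul_ne n _ _ h1, EE_mul_ne n _ _ h2, EE_mul_ne n _ _ h3, EE_mul_ne n _ _ h4,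
    EE_mul_ne n _ _ h1.symm, EE_mul_ne n _ _ h2.symm, EE_mul_ne n _ _ h3.symm,
    EE_mul_ne n _ _ h4.symm, add_zero, zero_add]
  module

noncomputable def bgenMat (n : ℕ) : BGen → Matrix (Fin n) (Fin n) R
  | .s i => burauA n i
  | .si i => burauAinv n i
  | .b i => burauB n i

lemma farAB (n : ℕ) (hn : 2 ≤ n) (i j : ℕ) (h1 : 1 ≤ i) (h2 : i + 2 ≤ j) (h3 : j ≤ n - 1)
    (M N : Matrix (Fin n) (Fin n) R)
    (hM : M = burauA n i ∨ M = burauB n i) (hN : N = burauA n j ∨ N = burauB n j) :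
    M * N = N * M := by
  have hj : j < n := by omega
  have ha : ((⟨i - 1, by omega⟩ : Fin n):ℕ) + 1 = i := by simp; omega
  have hb : ((⟨i, by omega⟩ : Fin n):ℕ) = i := rfl
  have ha' : ((⟨j - 1, by omega⟩ : Fin n):ℕ) + 1 = j := by simp; omega
  have hb' : ((⟨j, by omega⟩ : Fin n):ℕ) = j := rfl
  have n1 : (⟨i - 1, by omega⟩ : Fin n) ≠ ⟨j - 1, by omega⟩ := by
    simp only [ne_eq, Fin.mk.injEq]; omega
  have n2 : (⟨i - 1, by omega⟩ : Fin n) ≠ ⟨j, by omega⟩ := by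
    simp only [ne_eq, Fin.mk.injEq]; omega
  have n3 : (⟨i, by omega⟩ : Fin n) ≠ ⟨j - 1, by omega⟩ := by
    simp only [ne_eq, Fin.mk.injEq]; omega
  have n4 : (⟨i, by omega⟩ : Fin n) ≠ ⟨j, by omega⟩ := by
    simp only [ne_eq, Fin.mk.injEq]; omega
  rcases hM with rfl | rfl <;> rcases hN with rfl | rfl
  · exact far_comm n _ _ _ _ _ _ _ _ _ _ _ _ _ _
      (burauA_eq n i _ _ ha hb) (burauA_eq n j _ _ ha' hb') n1 n2 n3 n4
  · exact far_comm n _ _ _ _ _ _ _ _ _ _ _ _ _ _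
      (burauA_eq n i _ _ ha hb) (burauB_eq n j _ _ ha' hb') n1 n2 n3 n4
  · exact far_comm n _ _ _ _ _ _ _ _ _ _ _ _ _ _
      (burauB_eq n i _ _ ha hb) (burauA_eq n j _ _ ha' hb') n1 n2 n3 n4
  · exact far_comm n _ _ _ _ _ _ _ _ _ _ _ _ _ _
      (burauB_eq n i _ _ ha hb) (burauB_eq n j _ _ ha' hb') n1 n2 n3 n4

lemma ker_rel_holds (n : ℕ) (hn : 2 ≤ n) : ∀ x y, BRel n x y →
    (FreeMonoid.lift (bgenMat n)) x = (FreeMonoid.lift (bgenMat n)) y := by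
  intro x y hrel
  induction hrel with
  | r1 i h1 h2 =>
      simp only [_root_.map_mul, _root_.map_one, FreeMonoid.lift_eval_of, bgenMat]
      exact (mul_AAinv n i ⟨i-1, by omega⟩ ⟨i, by omega⟩ (by simp; omega) rfl).1
  | r1' i h1 h2 =>
      simp only [_root_.map_mul, _root_.map_one, FreeMonoid.lift_eval_of, bgenMat]
      exact (mul_AAinv n i ⟨i-1, by omega⟩ ⟨i, by omega⟩ (by simp; omega) rfl).2
  | r2 i j h1 h2 h3 =>
      simp only [_root_.map_mul, FreeMonoid.lift_eval_of, bgenMat]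
      exact farAB n hn i j h1 h2 h3 _ _ (Or.inl rfl) (Or.inl rfl)
  | r3 i h1 h2 =>
      simp only [_root_.map_mul, FreeMonoid.lift_eval_of, bgenMat]
      conv_rhs => rw [mul_assoc]
      exact braidA n i ⟨i-1, by omega⟩ ⟨i, by omega⟩ ⟨i+1, by omega⟩ (by simp; omega) rfl rfl
  | b1 i j h1 h2 h3 =>
      simp only [_root_.map_mul, FreeMonoid.lift_eval_of, bgenMat]
      exact farAB n hn i j h1 h2 h3 _ _ (Or.inr rfl) (Or.inr rfl)
  | m1 i j hi1 hi2 hj1 hj2 h =>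
      simp only [_root_.map_mul, FreeMonoid.lift_eval_of, bgenMat]
      rcases h with h | h
      · exact farAB n hn i j hi1 h hj2 _ _ (Or.inl rfl) (Or.inr rfl)
      · exact (farAB n hn j i hj1 h hi2 _ _ (Or.inr rfl) (Or.inl rfl)).symm
  | m2 i h1 h2 =>
      simp only [_root_.map_mul, FreeMonoid.lift_eval_of, bgenMat]
      exact commAB_same n i ⟨i-1, by omega⟩ ⟨i, by omega⟩ (by simp; omega) rfl
  | m3 i h1 h2 =>
      simp only [_root_.map_mul, FreeMonoid.lift_eval_of, bgenMat]
      exact m3rel n i ⟨i-1, by omega⟩ ⟨i, by omega⟩ ⟨i+1, by omega⟩ (by simp; omega) rfl rfl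
  | m4 i h1 h2 =>
      simp only [_root_.map_mul, FreeMonoid.lift_eval_of, bgenMat]
      exact m4rel n i ⟨i-1, by omega⟩ ⟨i, by omega⟩ ⟨i+1, by omega⟩ (by simp; omega) rfl rfl

/-- the unreduced Burau matrices satisfy the braid relation
`A_i A_{i+1} A_i = A_{i+1} A_i A_{i+1}`, and (together with far commutativity and
invertibility of each `A_i`) there is a well-defined monoid homomorphism
`M_n → GL_n(ℤ[t,t⁻¹,z])` sending `σ_i ↦ A_i` and `b_i ↦ B_i`. -/
theorem bonded_burau_representation (n : ℕ) (hn : 2 ≤ n) :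
    (∀ i, 1 ≤ i → i ≤ n - 2 →
      burauA n i * burauA n (i + 1) * burauA n i =
        burauA n (i + 1) * (burauA n i * burauA n (i + 1))) ∧
    (∀ i j, 1 ≤ i → i + 2 ≤ j → j ≤ n - 1 →
      burauA n i * burauA n j = burauA n j * burauA n i) ∧
    (∀ i, 1 ≤ i → i ≤ n - 1 → IsUnit (burauA n i)) ∧
    ∃ φ : BondedBraidMonoid n →* Matrix (Fin n) (Fin n) R,
      ∀ i, 1 ≤ i → i ≤ n - 1 →
        φ (Con.mk' _ (FreeMonoid.of (BGen.s i))) = burauA n i ∧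
        φ (Con.mk' _ (FreeMonoid.of (BGen.b i))) = burauB n i := by
  refine ⟨?_, ?_, ?_, ?_⟩
  · intro i h1 h2
    exact braidA n i ⟨i-1, by omega⟩ ⟨i, by omega⟩ ⟨i+1, by omega⟩ (by simp; omega) rfl rfl
  · intro i j h1 h2 h3
    exact farAB n hn i j h1 h2 h3 _ _ (Or.inl rfl) (Or.inl rfl)
  · intro i h1 h2
    have h := mul_AAinv n i ⟨i-1, by omega⟩ ⟨i, by omega⟩ (by simp; omega) rfl
    exact ⟨⟨burauA n i, burauAinv n i, h.1, h.2⟩, rfl⟩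
  · refine ⟨(conGen (BRel n)).lift (FreeMonoid.lift (bgenMat n))
      (Con.conGen_le.mpr fun x y h => (Con.ker_rel _).mpr (ker_rel_holds n hn x y h)), ?_⟩
    intro i h1 h2
    constructor <;> simp [Con.lift_mk', FreeMonoid.lift_eval_of, bgenMat]
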